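/- There is no entire function f : ℂ → ℂ such that f(z) ≠ 0 and f(z) ≠ z for every z ∈ ℂ. Equivalently, no function meromorphic in the whole plane ℂ can simultaneously avoid the three rational functions 0, ∞ and z (i.e., have its graph on the Riemann sphere disjoint from the graphs of the constant functions 0 and ∞ and of the identity function). -/

import Mathlib

open Complex Metric Set Real
open scoped Nat

/-- Every entire function has a primitive. -/
lemma entire_exists_primitive {f : ℂ → ℂ} (hf : Differentiable ℂ f) :
    ∃ F : ℂ → ℂ, ∀ z, HasDerivAt F (f z) z := by
  set a : ℕ → ℂ := fun n => (n ! : ℂ)⁻¹ * iteratedDeriv n f 0 with ha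
  have key : ∀ z : ℂ, HasSum (fun n => a n * z ^ n) (f z) := by
    intro z
    have h := Complex.hasSum_taylorSeries_of_entire hf 0 z
    convert h using 2 with n
    · rfl
    simp [ha, smul_eq_mul]
    ring
  refine ⟨fun z => ∑' n, a n * z ^ (n + 1) / (n + 1), fun z₀ => ?_⟩
  set R : ℝ := ‖z₀‖ + 1 with hR
  have hR0 : 0 < R := by positivity
  -- bound the coefficients using convergence at 2R
  have h2R := key (2 * R : ℝ)
  have hb : ∃ C : ℝ, 0 ≤ C ∧ ∀ n, ‖a n‖ * (2 * R) ^ n ≤ C := by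
    have := h2R.summable.tendsto_atTop_zero.norm.bddAbove_range
    obtain ⟨C, hC⟩ := this
    refine ⟨C, le_trans (norm_nonneg _) (hC (Set.mem_range_self 0)), fun n => ?_⟩
    have := hC (Set.mem_range_self n)
    simpa [norm_mul, norm_pow, abs_of_pos (by positivity : (0:ℝ) < 2 * R), abs_of_pos hR0] using this
  obtain ⟨C, hC0, hC⟩ := hb
  have hu : Summable (fun n : ℕ => C * (1 / 2) ^ n) :=
    (summable_geometric_of_lt_one (by norm_num) (by norm_num)).mul_left C
  have hder : ∀ (n : ℕ) (y : ℂ), HasDerivAt (fun z : ℂ => a n * z ^ (n + 1) / (n + 1))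
      (a n * y ^ n) y := by
    intro n y
    have h1 : HasDerivAt (fun z : ℂ => z ^ (n + 1)) ((n + 1 : ℕ) * y ^ n) y := by
      simpa using hasDerivAt_pow (n + 1) y
    have h2 := (h1.const_mul (a n)).div_const ((n : ℂ) + 1)
    convert h2 using 1
    all_goals try rfl
    have : ((n : ℂ) + 1) ≠ 0 := Nat.cast_add_one_ne_zero n
    field_simp
    push_cast; ring
  have hbd : ∀ (n : ℕ) (y : ℂ), y ∈ ball (0 : ℂ) R → ‖a n * y ^ n‖ ≤ C * (1 / 2) ^ n := by
    intro n y hy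
    rw [mem_ball_zero_iff] at hy
    have h1 : ‖a n * y ^ n‖ ≤ ‖a n‖ * R ^ n := by
      rw [norm_mul, norm_pow]
      exact mul_le_mul_of_nonneg_left (pow_le_pow_left₀ (norm_nonneg y) hy.le n) (norm_nonneg _)
    have h2 : ‖a n‖ * R ^ n = (‖a n‖ * (2 * R) ^ n) * (1 / 2) ^ n := by
      rw [mul_assoc, ← mul_pow]
      ring_nf
    calc ‖a n * y ^ n‖ ≤ ‖a n‖ * R ^ n := h1
      _ = (‖a n‖ * (2 * R) ^ n) * (1 / 2) ^ n := h2
      _ ≤ C * (1 / 2) ^ n := by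
          apply mul_le_mul_of_nonneg_right (hC n) (by positivity)
  have hsum0 : Summable fun n : ℕ => a n * (0 : ℂ) ^ (n + 1) / (n + 1) := by
    have : (fun n : ℕ => a n * (0 : ℂ) ^ (n + 1) / (n + 1)) = fun _ => 0 := by
      funext n; simp
    rw [this]; exact summable_zero
  have H := hasDerivAt_tsum_of_isPreconnected hu isOpen_ball (convex_ball (0:ℂ) R).isPreconnected
    (fun n y _ => hder n y) hbd (mem_ball_zero_iff.mpr (by simpa using hR0))
    hsum0 (mem_ball_zero_iff.mpr (by rw [hR]; linarith))
  convert H using 1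
  all_goals try rfl
  exact ((key z₀).tsum_eq).symm

/-- Every nonvanishing entire function has an entire logarithm. -/
lemma entire_exists_log {f : ℂ → ℂ} (hf : Differentiable ℂ f) (h0 : ∀ z, f z ≠ 0) :
    ∃ p : ℂ → ℂ, Differentiable ℂ p ∧ ∀ z, f z = Complex.exp (p z) := by
  have hderiv : Differentiable ℂ (deriv f) := by
    have h1 : AnalyticOnNhd ℂ f Set.univ := fun z _ => hf.analyticAt z
    exact fun z => ((h1.deriv) z (Set.mem_univ z)).differentiableAt
  have hg : Differentiable ℂ (fun z => deriv f z / f z) := hderiv.div hf h0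
  obtain ⟨F, hF⟩ := entire_exists_primitive hg
  set p : ℂ → ℂ := fun z => F z - F 0 + Complex.log (f 0) with hp
  have hFd : Differentiable ℂ F := fun z => (hF z).differentiableAt
  have hpd : Differentiable ℂ p := (hFd.sub_const _).add_const _
  refine ⟨p, hpd, ?_⟩
  have key : ∀ z, HasDerivAt (fun w => f w * Complex.exp (-p w)) 0 z := by
    intro z
    have h1 : HasDerivAt p (deriv f z / f z) z := by
      simpa [hp] using ((hF z).sub_const (F 0)).add_const (Complex.log (f 0))
    have h2 : HasDerivAt (fun w => Complex.exp (-p w)) 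
        (Complex.exp (-p z) * -(deriv f z / f z)) z := by
      simpa using (h1.neg.cexp)
    have h3 := ((hf z).hasDerivAt).mul h2
    convert h3 using 1
    all_goals try rfl
    field_simp [h0 z]
    ring
  have hconst : ∀ z, f z * Complex.exp (-p z) = f 0 * Complex.exp (-p 0) := by
    intro z
    have : ∀ w, deriv (fun w => f w * Complex.exp (-p w)) w = 0 := fun w => (key w).deriv
    exact is_const_of_deriv_eq_zero (fun w => (key w).differentiableAt) this z 0
  intro z
  have h4 : f 0 * Complex.exp (-p 0) = 1 := by
    have : p 0 = Complex.log (f 0) := by simp [hp]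
    rw [this, Complex.exp_neg, Complex.exp_log (h0 0), mul_inv_cancel₀ (h0 0)]
  have h5 := (hconst z).trans h4
  have h6 : Complex.exp (-p z) ≠ 0 := Complex.exp_ne_zero _
  simp only [Complex.exp_neg] at h5
  field_simp at h5
  linear_combination h5

lemma landau_estimate {f : ℂ → ℂ} (hf : Differentiable ℂ f) {c w : ℂ} {r M : ℝ}
    (hr : 0 < r) (hw : ∀ z, f z ≠ w) (hM : ∀ z ∈ sphere c r, ‖f z - f c‖ ≤ M) :
    ‖deriv f c‖ / (2 * ‖w - f c‖) ≤ Real.sqrt (1 + M / ‖w - f c‖) / r := by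
  set d : ℝ := ‖w - f c‖ with hd
  have hwc : w - f c ≠ 0 := sub_ne_zero.mpr (fun h => hw c h.symm)
  have hd0 : 0 < d := norm_pos_iff.mpr hwc
  -- the auxiliary nonvanishing function
  set Φ : ℂ → ℂ := fun z => (w - f z) / (w - f c) with hΦ
  have hΦd : Differentiable ℂ Φ := ((differentiable_const w).sub hf).div_const _
  have hΦ0 : ∀ z, Φ z ≠ 0 := fun z =>
    div_ne_zero (sub_ne_zero.mpr (fun h => hw z h.symm)) hwc
  obtain ⟨p, hpd, hpe⟩ := entire_exists_log hΦd hΦ0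
  set G : ℂ → ℂ := fun z => Complex.exp (p z / 2) with hG
  have hGd : Differentiable ℂ G := (hpd.div_const 2).cexp
  have hGsq : ∀ z, G z * G z = Φ z := by
    intro z
    rw [hG]
    simp only []
    rw [← Complex.exp_add]
    have h2 : p z / 2 + p z / 2 = p z := by ring
    rw [h2, ← hpe z]
  -- bound for G on the sphere
  have hGb : ∀ z ∈ sphere c r, ‖G z‖ ≤ Real.sqrt (1 + M / d) := by
    intro z hz
    have h1 : ‖G z‖ ^ 2 = ‖Φ z‖ := by
      rw [← hGsq z, norm_mul]; ring
    have h2 : ‖Φ z‖ ≤ 1 + M / d := by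
      rw [hΦ]
      rw [norm_div]
      rw [div_le_iff₀ hd0]
      have : w - f z = (w - f c) - (f z - f c) := by ring
      rw [this]
      calc ‖(w - f c) - (f z - f c)‖ ≤ ‖w - f c‖ + ‖f z - f c‖ := norm_sub_le _ _
        _ ≤ d + M := by exact add_le_add le_rfl (hM z hz)
        _ = (1 + M / d) * d := by field_simp
    have h3 : ‖G z‖ = Real.sqrt (‖G z‖ ^ 2) := (Real.sqrt_sq (norm_nonneg _)).symm
    rw [h3, h1]
    exact Real.sqrt_le_sqrt h2
  -- Cauchy estimate
  have hcauchy : ‖deriv G c‖ ≤ Real.sqrt (1 + M / d) / r :=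
    Complex.norm_deriv_le_of_forall_mem_sphere_norm_le hr hGd.diffContOnCl hGb
  -- compute deriv G c
  have hΦc : Φ c = 1 := div_self hwc
  have hpc : Complex.exp (p c) = 1 := by rw [← hpe c]; exact hΦc
  have hd1 : HasDerivAt Φ (-deriv f c / (w - f c)) c := by
    have := (((hf c).hasDerivAt).const_sub w).div_const (w - f c)
    simpa [neg_div] using this
  have hd2 : HasDerivAt Φ (Complex.exp (p c) * deriv p c) c := by
    have h := ((hpd c).hasDerivAt).cexp
    have hfun : Φ = fun z => Complex.exp (p z) := funext fun z => hpe z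
    rw [hfun]
    exact h
  have hpc' : deriv p c = -deriv f c / (w - f c) := by
    have := hd2.unique hd1
    rwa [hpc, one_mul] at this
  have hdG : HasDerivAt G (Complex.exp (p c / 2) * (deriv p c / 2)) c :=
    ((hpd c).hasDerivAt.div_const 2).cexp
  have hnormexp : ‖Complex.exp (p c / 2)‖ = 1 := by
    have h1 : Complex.exp (p c / 2) * Complex.exp (p c / 2) = 1 := by
      rw [← Complex.exp_add]; norm_num [hpc]
    have h2 := congrArg norm h1
    rw [norm_mul, norm_one] at h2
    nlinarith [norm_nonneg (Complex.exp (p c / 2))]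
  have hnd : ‖deriv G c‖ = ‖deriv f c‖ / (2 * d) := by
    rw [hdG.deriv, norm_mul, hnormexp, one_mul, hpc']
    simp [norm_div, hd]
    ring
  rwa [hnd] at hcauchy

/-- Bloch-type theorem for entire functions: the image avoids no disc of radius
`R ‖f'(0)‖ / 20`. -/
lemma bloch_entire {f : ℂ → ℂ} (hf : Differentiable ℂ f) {R : ℝ} (hR : 0 < R) :
    ∃ ζ : ℂ, ∀ w : ℂ, (∀ z, f z ≠ w) → R * ‖deriv f 0‖ / 20 ≤ ‖w - ζ‖ := by
  by_cases h0 : deriv f 0 = 0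
  · exact ⟨0, fun w _ => by simp [h0]⟩
  have hderiv : Differentiable ℂ (deriv f) := by
    have h1 : AnalyticOnNhd ℂ f Set.univ := fun z _ => hf.analyticAt z
    exact fun z => ((h1.deriv) z (Set.mem_univ z)).differentiableAt
  set K : ℂ → ℝ := fun z => ‖deriv f z‖ * (R - ‖z‖) with hK
  have hKc : ContinuousOn K (closedBall 0 R) :=
    (hderiv.continuous.norm.mul (continuous_const.sub continuous_norm)).continuousOn
  obtain ⟨p, hpmem, hpmax⟩ := (isCompact_closedBall (0:ℂ) R).exists_isMaxOn
    ⟨0, mem_closedBall_self hR.le⟩ hKc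
  have hK0 : K 0 = R * ‖deriv f 0‖ := by simp [hK, mul_comm]
  have hK0p : R * ‖deriv f 0‖ ≤ K p := by
    have h := hpmax (mem_closedBall_self hR.le)
    have h' : K 0 ≤ K p := h
    rwa [hK0] at h'
  have hKp0 : 0 < K p :=
    lt_of_lt_of_le (mul_pos hR (norm_pos_iff.mpr h0)) hK0p
  have hpR : ‖p‖ < R := by
    by_contra h
    push_neg at h
    have : K p ≤ 0 := mul_nonpos_of_nonneg_of_nonpos (norm_nonneg _) (by linarith)
    linarith
  set t : ℝ := (R - ‖p‖) / 2 with ht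
  have ht0 : 0 < t := by rw [ht]; linarith
  -- derivative bound on closedBall p t
  have hdb : ∀ z ∈ closedBall p t, ‖deriv f z‖ ≤ K p / t := by
    intro z hz
    have hz1 : ‖z - p‖ ≤ t := mem_closedBall_iff_norm.mp hz
    have hz2 : ‖z‖ ≤ ‖p‖ + t := by
      calc ‖z‖ = ‖p + (z - p)‖ := by ring_nf
        _ ≤ ‖p‖ + ‖z - p‖ := norm_add_le _ _
        _ ≤ ‖p‖ + t := by linarith
    have hz3 : z ∈ closedBall 0 R := by
      rw [mem_closedBall_zero_iff]
      rw [ht] at hz2; linarith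
    have hz4 : t ≤ R - ‖z‖ := by rw [ht] at hz2 ⊢; linarith
    have h5 : K z ≤ K p := hpmax hz3
    have h6 : ‖deriv f z‖ * t ≤ K p := by
      calc ‖deriv f z‖ * t ≤ ‖deriv f z‖ * (R - ‖z‖) :=
            mul_le_mul_of_nonneg_left hz4 (norm_nonneg _)
        _ ≤ K p := h5
    rwa [← le_div_iff₀ ht0] at h6
  -- mean value bound on the sphere
  have hM : ∀ z ∈ sphere p t, ‖f z - f p‖ ≤ K p := by
    intro z hz
    have hzmem : z ∈ closedBall p t := sphere_subset_closedBall hz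
    have := (convex_closedBall p t).norm_image_sub_le_of_norm_deriv_le
      (fun x _ => hf.differentiableAt) hdb (mem_closedBall_self ht0.le) hzmem
    have hzt : ‖z - p‖ = t := mem_sphere_iff_norm.mp hz
    calc ‖f z - f p‖ ≤ K p / t * ‖z - p‖ := this
      _ = K p := by rw [hzt]; field_simp
  refine ⟨f p, fun w hw => ?_⟩
  set d : ℝ := ‖w - f p‖ with hd
  have hle := landau_estimate hf ht0 hw hM
  have hd0 : 0 < d := norm_pos_iff.mpr (sub_ne_zero.mpr (fun h => hw p h.symm))
  have hKp2 : K p = ‖deriv f p‖ * (2 * t) := by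
    show ‖deriv f p‖ * (R - ‖p‖) = ‖deriv f p‖ * (2 * t)
    rw [ht]; ring
  have key : K p / 20 ≤ d := by
    by_contra hcon
    push_neg at hcon
    have hsq := Real.sq_sqrt (by positivity : (0:ℝ) ≤ 1 + K p / d)
    have hsn := Real.sqrt_nonneg (1 + K p / d)
    set s : ℝ := Real.sqrt (1 + K p / d) with hs
    rw [div_le_div_iff₀ (by positivity) ht0] at hle
    -- hle : ‖deriv f p‖ * t ≤ s * (2 * d)
    have h7 : K p ≤ 4 * d * s := by nlinarith
    have h9 : K p ^ 2 ≤ 16 * d ^ 2 * (1 + K p / d) := by nlinarith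
    have h10 : 16 * d ^ 2 * (1 + K p / d) = 16 * d ^ 2 + 16 * d * K p := by
      field_simp
    nlinarith
  linarith

/-- An entire function omitting a `4`-dense set of values is constant. -/
lemma const_of_omits_dense {f : ℂ → ℂ} (hf : Differentiable ℂ f)
    (h : ∀ ζ : ℂ, ∃ w : ℂ, ‖w - ζ‖ ≤ 4 ∧ ∀ z, f z ≠ w) : ∀ z, f z = f 0 := by
  have hd : ∀ a, deriv f a = 0 := by
    intro a
    by_contra ha
    have hμ : 0 < ‖deriv f a‖ := norm_pos_iff.mpr ha
    set g : ℂ → ℂ := fun z => f (z + a) with hg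
    have hgd : Differentiable ℂ g := hf.comp (differentiable_id.add_const a)
    have hg0 : deriv g 0 = deriv f a := by
      have h1 : HasDerivAt g (deriv f (0 + a) * 1) 0 :=
        ((hf (0 + a)).hasDerivAt).comp 0 ((hasDerivAt_id 0).add_const a)
      simpa using h1.deriv
    obtain ⟨ζ, hζ⟩ := bloch_entire hgd (R := 100 / ‖deriv f a‖) (by positivity)
    obtain ⟨w, hw4, hwo⟩ := h ζ
    have h5 := hζ w (fun z => hwo (z + a))
    rw [hg0] at h5
    have : (100 / ‖deriv f a‖) * ‖deriv f a‖ / 20 = 5 := by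
      rw [div_mul_cancel₀ _ (ne_of_gt hμ)]; norm_num
    rw [this] at h5
    linarith
  intro z
  exact is_const_of_deriv_eq_zero hf hd z 0

/-- the grid radii `log (√n + √(n-1))` are `3/2`-dense in `[0, ∞)`. -/
lemma exists_grid_radius (x : ℝ) (hx : 0 ≤ x) :
    ∃ n : ℕ, 1 ≤ n ∧ |x - Real.log (Real.sqrt n + Real.sqrt ((n : ℝ) - 1))| ≤ 3 / 2 := by
  set r : ℕ → ℝ := fun m => Real.log (Real.sqrt m + Real.sqrt ((m : ℝ) - 1)) with hr
  have hB : ∀ m : ℕ, 1 ≤ m → 1 ≤ Real.sqrt m + Real.sqrt ((m : ℝ) - 1) := by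
    intro m hm
    have h1 : (1 : ℝ) ≤ Real.sqrt m := by
      rw [show (1:ℝ) = Real.sqrt 1 by simp]
      exact Real.sqrt_le_sqrt (by exact_mod_cast hm)
    have h2 : 0 ≤ Real.sqrt ((m : ℝ) - 1) := Real.sqrt_nonneg _
    linarith
  have hgap : ∀ m : ℕ, 1 ≤ m → r (m + 1) ≤ r m + 3 / 2 := by
    intro m hm
    set B : ℝ := Real.sqrt m + Real.sqrt ((m : ℝ) - 1) with hBdef
    set A : ℝ := Real.sqrt (m + 1) + Real.sqrt m with hAdef
    have hB1 : 1 ≤ B := hB m hm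
    have hB0 : 0 < B := by linarith
    have hs2 : Real.sqrt 2 ≤ 3 / 2 := by
      rw [show (3:ℝ)/2 = Real.sqrt ((3/2)^2) by rw [Real.sqrt_sq]; norm_num]
      exact Real.sqrt_le_sqrt (by norm_num)
    have hA : A ≤ 5 / 2 * B := by
      rcases eq_or_lt_of_le hm with h1 | h1
      · -- m = 1
        have : m = 1 := h1.symm
        subst this
        have e1 : Real.sqrt ((1:ℕ) + 1 : ℝ) = Real.sqrt 2 := by norm_num
        have e2 : Real.sqrt ((1:ℕ) : ℝ) = 1 := by norm_num
        have e3 : Real.sqrt (((1:ℕ) : ℝ) - 1) = 0 := by norm_num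
        rw [hAdef, hBdef]
        push_cast
        rw [show ((1:ℝ) - 1) = 0 by ring]
        simp [Real.sqrt_eq_zero']
        linarith
      · -- m ≥ 2
        have hm2 : (2 : ℕ) ≤ m := h1
        have hm2' : (2 : ℝ) ≤ (m : ℝ) := by exact_mod_cast hm2
        have e1 : Real.sqrt ((m : ℝ) + 1) ≤ Real.sqrt 2 * Real.sqrt m := by
          rw [← Real.sqrt_mul (by norm_num)]
          exact Real.sqrt_le_sqrt (by linarith)
        have e2 : Real.sqrt (m : ℝ) ≤ Real.sqrt 2 * Real.sqrt ((m : ℝ) - 1) := by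
          rw [← Real.sqrt_mul (by norm_num)]
          exact Real.sqrt_le_sqrt (by linarith)
        have e3 : A ≤ Real.sqrt 2 * B := by
          rw [hAdef, hBdef]
          push_cast
          linarith
        calc A ≤ Real.sqrt 2 * B := e3
          _ ≤ 5 / 2 * B := by nlinarith
    have hA0 : 0 < A := by
      have := Real.sqrt_nonneg ((m : ℝ) + 1)
      have h2 : (1:ℝ) ≤ Real.sqrt m := by
        rw [show (1:ℝ) = Real.sqrt 1 by simp]
        exact Real.sqrt_le_sqrt (by exact_mod_cast hm)
      rw [hAdef]; push_cast; linarith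
    have hAeq : r (m + 1) = Real.log A := by
      rw [hr]
      push_cast
      rw [show ((m:ℝ) + 1 - 1) = (m:ℝ) by ring]
    have hBeq : r m = Real.log B := rfl
    have key : r (m + 1) - r m ≤ 3 / 2 := by
      rw [hAeq, hBeq, ← Real.log_div (ne_of_gt hA0) (ne_of_gt hB0)]
      have e5 : Real.log (A / B) ≤ A / B - 1 := Real.log_le_sub_one_of_pos (by positivity)
      have e6 : A / B ≤ 5 / 2 := by
        rw [div_le_iff₀ hB0]; linarith
      linarith
    linarith
  have hr1 : r 1 = 0 := by
    rw [hr]; push_cast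
    rw [show ((1:ℝ) - 1) = 0 by ring]
    simp
  -- r is eventually larger than x
  have hex : ∃ m : ℕ, x < r (m + 2) := by
    set m₀ : ℕ := ⌈Real.exp (2 * x)⌉₊ with hm₀
    refine ⟨m₀, ?_⟩
    have h1 : Real.exp (2 * x) ≤ (m₀ : ℝ) := Nat.le_ceil _
    have h2 : Real.exp (2 * x) < ((m₀ + 2 : ℕ) : ℝ) := by push_cast; linarith
    have h3 : 2 * x < Real.log ((m₀ + 2 : ℕ) : ℝ) := by
      rw [← Real.log_exp (2 * x)]
      exact Real.log_lt_log (Real.exp_pos _) h2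
    have h4 : x < Real.log (Real.sqrt ((m₀ + 2 : ℕ) : ℝ)) := by
      rw [Real.log_sqrt (by positivity)]
      linarith
    have h5 : Real.log (Real.sqrt ((m₀ + 2 : ℕ) : ℝ)) ≤ r (m₀ + 2) := by
      rw [hr]
      apply Real.log_le_log (Real.sqrt_pos.mpr (by positivity))
      have := Real.sqrt_nonneg (((m₀ + 2 : ℕ) : ℝ) - 1)
      linarith
    linarith
  have hNs : x < r (Nat.find hex + 2) := Nat.find_spec hex
  rcases Nat.eq_zero_or_pos (Nat.find hex) with h | h
  · refine ⟨1, le_rfl, ?_⟩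
    rw [h] at hNs
    have h2 : x < r 2 := by simpa using hNs
    have h3 : r 2 ≤ r 1 + 3 / 2 := hgap 1 le_rfl
    show |x - r 1| ≤ 3 / 2
    rw [hr1, sub_zero, _root_.abs_of_nonneg hx]
    linarith
  · obtain ⟨N', hN'⟩ : ∃ N', Nat.find hex = N' + 1 := ⟨Nat.find hex - 1, by omega⟩
    have hmin : ¬ x < r (N' + 2) := Nat.find_min hex (by omega)
    push_neg at hmin
    refine ⟨N' + 2, by omega, ?_⟩
    have h3 : r (N' + 2 + 1) ≤ r (N' + 2) + 3 / 2 := hgap (N' + 2) (by omega)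
    have h4 : x < r (N' + 2 + 1) := by
      rw [hN'] at hNs
      have e : N' + 2 + 1 = N' + 1 + 2 := by omega
      rw [e]
      exact hNs
    show |x - r (N' + 2)| ≤ 3 / 2
    rw [abs_le]
    constructor <;> linarith

/-- value of `cosh²` at points `x₀ + kπi`. -/
lemma grid_value (x₀ : ℝ) (k : ℤ) :
    ((Complex.exp ((x₀ : ℂ) + k * π * I) + Complex.exp (-((x₀ : ℂ) + k * π * I))) / 2) ^ 2
      = ((((Real.exp x₀ + Real.exp (-x₀)) / 2) ^ 2 : ℝ) : ℂ) := by
  set ε : ℂ := Complex.exp ((k : ℂ) * π * I) with hε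
  have hε2 : ε * ε = 1 := by
    rw [hε, ← Complex.exp_add]
    have h : (k : ℂ) * π * I + k * π * I = (k : ℂ) * (2 * π * I) := by ring
    rw [h]
    exact Complex.exp_int_mul_two_pi_mul_I k
  have hεinv : Complex.exp (-((k : ℂ) * π * I)) = ε := by
    rw [Complex.exp_neg, ← hε, inv_eq_of_mul_eq_one_right hε2]
  have e1 : Complex.exp ((x₀ : ℂ) + k * π * I) = Complex.exp (x₀ : ℂ) * ε := by
    rw [hε, ← Complex.exp_add]
  have e2 : Complex.exp (-((x₀ : ℂ) + k * π * I)) = Complex.exp (-(x₀ : ℂ)) * ε := by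
    rw [← hεinv, ← Complex.exp_add]; ring_nf
  rw [e1, e2]
  have e3 : (Complex.exp (x₀ : ℂ) * ε + Complex.exp (-(x₀ : ℂ)) * ε) / 2
      = ε * ((Complex.exp (x₀ : ℂ) + Complex.exp (-(x₀ : ℂ))) / 2) := by ring
  rw [e3, mul_pow]
  rw [show ε ^ 2 = 1 by rw [sq]; exact hε2, one_mul]
  push_cast [Complex.ofReal_exp]
  ring

/-- Picard's little theorem, in the form needed: an entire function omitting `0` and `1`
is constant. -/
lemma picard_little {f : ℂ → ℂ} (hf : Differentiable ℂ f) (h0 : ∀ z, f z ≠ 0)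
    (h1 : ∀ z, f z ≠ 1) : ∀ z, f z = f 0 := by
  obtain ⟨p₁, hp₁d, hp₁⟩ := entire_exists_log hf h0
  set F : ℂ → ℂ := fun z => p₁ z / (2 * π * I) with hF
  have hFd : Differentiable ℂ F := hp₁d.div_const _
  have hp₁F : ∀ z, p₁ z = F z * (2 * π * I) := by
    intro z
    rw [hF]
    exact (div_mul_cancel₀ (p₁ z) Complex.two_pi_I_ne_zero).symm
  have hFn : ∀ z : ℂ, ∀ n : ℕ, F z ≠ (n : ℂ) := by
    intro z n hzn
    apply h1 z
    rw [hp₁ z, hp₁F z, hzn]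
    exact_mod_cast Complex.exp_int_mul_two_pi_mul_I (n : ℤ)
  obtain ⟨q₁, hq₁d, hq₁⟩ := entire_exists_log hFd
    (fun z => by simpa using hFn z 0)
  obtain ⟨q₂, hq₂d, hq₂⟩ := entire_exists_log (hFd.sub_const 1)
    (fun z => sub_ne_zero.mpr (by simpa using hFn z 1))
  set g₁ : ℂ → ℂ := fun z => Complex.exp (q₁ z / 2) with hg₁
  set g₂ : ℂ → ℂ := fun z => Complex.exp (q₂ z / 2) with hg₂
  have hg₁sq : ∀ z, g₁ z ^ 2 = F z := by
    intro z
    rw [hg₁]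
    show Complex.exp (q₁ z / 2) ^ 2 = F z
    rw [sq, ← Complex.exp_add, show q₁ z / 2 + q₁ z / 2 = q₁ z by ring, ← hq₁ z]
  have hg₂sq : ∀ z, g₂ z ^ 2 = F z - 1 := by
    intro z
    rw [hg₂]
    show Complex.exp (q₂ z / 2) ^ 2 = F z - 1
    rw [sq, ← Complex.exp_add, show q₂ z / 2 + q₂ z / 2 = q₂ z by ring, ← hq₂ z]
  set H : ℂ → ℂ := fun z => g₁ z - g₂ z with hH
  have hHd : Differentiable ℂ H := ((hq₁d.div_const 2).cexp).sub ((hq₂d.div_const 2).cexp)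
  have hHinv : ∀ z, H z * (g₁ z + g₂ z) = 1 := by
    intro z
    show (g₁ z - g₂ z) * (g₁ z + g₂ z) = 1
    linear_combination hg₁sq z - hg₂sq z
  have hH0 : ∀ z, H z ≠ 0 := fun z => left_ne_zero_of_mul_eq_one (hHinv z)
  obtain ⟨L, hLd, hL⟩ := entire_exists_log hHd hH0
  have hkey : ∀ z, ((Complex.exp (L z) + Complex.exp (-(L z))) / 2) ^ 2 = F z := by
    intro z
    have e1 : Complex.exp (L z) = H z := (hL z).symm
    have e2 : Complex.exp (-(L z)) = g₁ z + g₂ z := by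
      rw [Complex.exp_neg, e1]
      exact inv_eq_of_mul_eq_one_right (hHinv z)
    rw [e1, e2]
    show ((g₁ z - g₂ z + (g₁ z + g₂ z)) / 2) ^ 2 = F z
    linear_combination hg₁sq z
  -- the omitted values of L
  have homit : ∀ (x₀ : ℝ) (k : ℤ) (n : ℕ),
      (((Real.exp x₀ + Real.exp (-x₀)) / 2) ^ 2 = (n : ℝ)) →
      ∀ z, L z ≠ (x₀ : ℂ) + k * π * I := by
    intro x₀ k n hn z hz
    apply hFn z n
    rw [← hkey z, hz, grid_value x₀ k, hn]
    norm_cast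
  -- density of omitted values
  have hdense : ∀ ζ : ℂ, ∃ w : ℂ, ‖w - ζ‖ ≤ 4 ∧ ∀ z, L z ≠ w := by
    intro ζ
    set k : ℤ := round (ζ.im / π) with hk
    have hπ : (0:ℝ) < π := Real.pi_pos
    have hkb : |ζ.im - k * π| ≤ 2 := by
      have h2 := abs_sub_round (ζ.im / π)
      have h3 : ζ.im - k * π = (ζ.im / π - k) * π := by field_simp
      rw [h3, abs_mul, abs_of_pos hπ]
      have h4 : |ζ.im / π - k| * π ≤ (1/2) * π := by
        apply mul_le_mul_of_nonneg_right h2 hπ.le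
      have := Real.pi_le_four
      linarith
    obtain ⟨n, hn1, hnx⟩ := exists_grid_radius |ζ.re| (abs_nonneg _)
    set s : ℝ := Real.sqrt n + Real.sqrt ((n:ℝ) - 1) with hs
    have hn1' : (1:ℝ) ≤ (n:ℝ) := by exact_mod_cast hn1
    have hs1 : 1 ≤ s := by
      have h5 : (1:ℝ) ≤ Real.sqrt n := by
        rw [show (1:ℝ) = Real.sqrt 1 by simp]
        exact Real.sqrt_le_sqrt hn1'
      have h6 : 0 ≤ Real.sqrt ((n:ℝ) - 1) := Real.sqrt_nonneg _
      rw [hs]; linarith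
    have hs0 : 0 < s := by linarith
    -- cosh of log s is √n
    have hcosh : ((Real.exp (Real.log s) + Real.exp (-Real.log s)) / 2) ^ 2 = (n : ℝ) := by
      have e1 : Real.exp (Real.log s) = s := Real.exp_log hs0
      have e2 : Real.exp (-Real.log s) = s⁻¹ := by rw [Real.exp_neg, e1]
      have e3 : s * (Real.sqrt n - Real.sqrt ((n:ℝ) - 1)) = 1 := by
        rw [hs]
        have h7 : Real.sqrt n * Real.sqrt n = (n:ℝ) := Real.mul_self_sqrt (by linarith)
        have h8 : Real.sqrt ((n:ℝ) - 1) * Real.sqrt ((n:ℝ) - 1) = (n:ℝ) - 1 :=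
          Real.mul_self_sqrt (by linarith)
        linear_combination h7 - h8
      have e4 : s⁻¹ = Real.sqrt n - Real.sqrt ((n:ℝ) - 1) :=
        (inv_eq_of_mul_eq_one_right e3)
      rw [e1, e2, e4, hs]
      have h7 : Real.sqrt n * Real.sqrt n = (n:ℝ) := Real.mul_self_sqrt (by linarith)
      linear_combination h7
    set x₀ : ℝ := if 0 ≤ ζ.re then Real.log s else -Real.log s with hx₀
    have hre : |ζ.re - x₀| ≤ 3/2 := by
      rw [hx₀]
      by_cases hsign : 0 ≤ ζ.re
      · rw [if_pos hsign]
        rwa [_root_.abs_of_nonneg hsign] at hnx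
      · rw [if_neg hsign]
        push_neg at hsign
        rw [_root_.abs_of_neg hsign] at hnx
        rw [show ζ.re - -Real.log s = -(-ζ.re - Real.log s) by ring, abs_neg]
        exact hnx
    have hcosh' : ((Real.exp x₀ + Real.exp (-x₀)) / 2) ^ 2 = (n : ℝ) := by
      rw [hx₀]
      by_cases hsign : 0 ≤ ζ.re
      · rw [if_pos hsign]; exact hcosh
      · rw [if_neg hsign, neg_neg, add_comm]; exact hcosh
    refine ⟨(x₀ : ℂ) + k * π * I, ?_, homit x₀ k n hcosh'⟩
    have hwre : ((x₀ : ℂ) + k * π * I - ζ).re = x₀ - ζ.re := by simp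
    have hwim : ((x₀ : ℂ) + k * π * I - ζ).im = k * π - ζ.im := by simp
    calc ‖(x₀ : ℂ) + k * π * I - ζ‖
        ≤ |((x₀ : ℂ) + k * π * I - ζ).re| + |((x₀ : ℂ) + k * π * I - ζ).im| :=
          Complex.norm_le_abs_re_add_abs_im _
      _ ≤ 3/2 + 2 := by
          rw [hwre, hwim]
          have := abs_sub_comm ζ.re x₀
          have := abs_sub_comm ζ.im (k * π)
          apply add_le_add
          · rw [abs_sub_comm]; exact hre
          · rw [abs_sub_comm]; exact hkb
      _ ≤ 4 := by norm_num
  -- conclude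
  have hLc := const_of_omits_dense hLd hdense
  intro z
  have hFc : F z = F 0 := by rw [← hkey z, ← hkey 0, hLc z]
  rw [hp₁ z, hp₁ 0, hp₁F z, hp₁F 0, hFc]

theorem no_entire_avoids_zero_and_id :
    ¬ ∃ f : ℂ → ℂ, Differentiable ℂ f ∧ ∀ z : ℂ, f z ≠ 0 ∧ f z ≠ z := by
  rintro ⟨f, hf, h⟩
  set u : ℂ → ℂ := fun z => (f z - z) / f z with hu
  have hud : Differentiable ℂ u := (hf.sub differentiable_id).div hf (fun z => (h z).1)
  have hu0 : ∀ z, u z ≠ 0 :=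
    fun z => div_ne_zero (sub_ne_zero.mpr (h z).2) (h z).1
  obtain ⟨p, hpd, hpe⟩ := entire_exists_log hud hu0
  have he1 : ∀ z : ℂ, z ≠ 0 → Complex.exp (p z) ≠ 1 := by
    intro z hz hexp
    rw [← hpe z, hu] at hexp
    have h2 : f z - z = f z := (div_eq_one_iff_eq (h z).1).mp hexp
    exact hz (sub_eq_self.mp h2)
  have he0 : Complex.exp (p 0) = 1 := by
    rw [← hpe 0, hu]
    simp [div_self (h 0).1]
  obtain ⟨k₀, hk₀⟩ := Complex.exp_eq_one_iff.mp he0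
  set c : ℂ := 2 * π * I with hc
  have hcne : c ≠ 0 := Complex.two_pi_I_ne_zero
  have key : ∀ (m : ℤ), m ≠ k₀ → ∀ z, p z ≠ (m : ℂ) * c := by
    intro m hm z hp'
    by_cases hz0 : z = 0
    · rw [hz0, hk₀] at hp'
      have h3 : (k₀ : ℂ) = (m : ℂ) := mul_right_cancel₀ hcne hp'
      exact hm (by exact_mod_cast h3.symm)
    · exact he1 z hz0 (by rw [hp', hc]; exact Complex.exp_int_mul_two_pi_mul_I m)
  set q : ℂ → ℂ := fun z => p z / c - (k₀ + 1) with hq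
  have hqd : Differentiable ℂ q := (hpd.div_const c).sub_const _
  have hpq : ∀ z, p z = (q z + ((k₀ : ℂ) + 1)) * c := by
    intro z
    rw [hq]
    field_simp
    ring
  have hq0 : ∀ z, q z ≠ 0 := by
    intro z hz
    apply key (k₀ + 1) (by omega) z
    rw [hpq z, hz]
    push_cast
    ring
  have hq1 : ∀ z, q z ≠ 1 := by
    intro z hz
    apply key (k₀ + 2) (by omega) z
    rw [hpq z, hz]
    push_cast
    ring
  have hqc := picard_little hqd hq0 hq1
  have hpc : p 1 = p 0 := by rw [hpq 1, hpq 0, hqc 1]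
  exact he1 1 one_ne_zero (by rw [hpc]; exact he0)
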